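/- Let D be an odd positive integer and let (M,b) be a linear constraint system over ℤ_D with n variables. Then (M,b) admits a quantum solution on (ℂ^D)^{⊗n} in which every operator A_i is an n-quDit generalized Pauli operator if and only if (M,b) has a classical solution. -/

import Mathlib

noncomputable section

/-- ω = exp(2πi/D). -/
noncomputable def rootOfUnity (D : ℕ) : ℂ := Complex.exp (2 * Real.pi * Complex.I / D)

/-- The boost operator `Z = Σ_j ω^j |j⟩⟨j|` on `ℂ^D`, as a matrix indexed by `ZMod D`. -/
noncomputable def ZMat (D : ℕ) : Matrix (ZMod D) (ZMod D) ℂ :=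
  Matrix.of fun i j => if i = j then rootOfUnity D ^ (ZMod.val j) else 0

/-- The shift operator `X = Σ_j |j+1⟩⟨j|` on `ℂ^D`, as a matrix indexed by `ZMod D`. -/
def XMat (D : ℕ) : Matrix (ZMod D) (ZMod D) ℂ :=
  Matrix.of fun i j => if i = j + 1 then 1 else 0

/-- The parity operator `Π_D = Σ_j |-j⟩⟨j|` on `ℂ^D`. -/
def parityMat (D : ℕ) : Matrix (ZMod D) (ZMod D) ℂ :=
  Matrix.of fun i j => if i = -j then 1 else 0

/-- A single-quDit generalized Pauli operator: any matrix of the form `ω^k Z^p X^q` with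
`k, p, q ∈ ℤ_D`. -/
def IsPauli1 (D : ℕ) [NeZero D] (σ : Matrix (ZMod D) (ZMod D) ℂ) : Prop :=
  ∃ k p q : ZMod D, σ = rootOfUnity D ^ k.val • (ZMat D ^ p.val * XMat D ^ q.val)

/-- The tensor product `σ₁ ⊗ ⋯ ⊗ σₙ` of `n` one-quDit matrices, as a matrix on
`(ℂ^D)^{⊗n}` indexed by `Fin n → ZMod D`. -/
noncomputable def tensorFun {D n : ℕ} (σs : Fin n → Matrix (ZMod D) (ZMod D) ℂ) :
    Matrix (Fin n → ZMod D) (Fin n → ZMod D) ℂ :=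
  Matrix.of fun f g => ∏ k, σs k (f k) (g k)

/-- An `n`-quDit generalized Pauli operator: a tensor product of `n` single-quDit
generalized Pauli operators. -/
def IsPauliN (D n : ℕ) [NeZero D]
    (σ : Matrix (Fin n → ZMod D) (Fin n → ZMod D) ℂ) : Prop :=
  ∃ σs : Fin n → Matrix (ZMod D) (ZMod D) ℂ, (∀ k, IsPauli1 D (σs k)) ∧ σ = tensorFun σs

end

namespace LCSAux

noncomputable def zeta (D : ℕ) (a : ZMod D) : ℂ := rootOfUnity D ^ a.val

section Zeta

variable (D : ℕ) [NeZero D]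

lemma root_pow_eq_one_iff (x : ℕ) : rootOfUnity D ^ x = 1 ↔ D ∣ x := by
  have hD : (D : ℂ) ≠ 0 := Nat.cast_ne_zero.mpr (NeZero.ne D)
  have h2 : (2 * Real.pi * Complex.I : ℂ) ≠ 0 := by
    simp [Real.pi_ne_zero, Complex.I_ne_zero]
  rw [rootOfUnity, ← Complex.exp_nat_mul, Complex.exp_eq_one_iff]
  constructor
  · rintro ⟨k, hk⟩
    have h' : (x : ℂ) * (2 * Real.pi * Complex.I) = (k * D) * (2 * Real.pi * Complex.I) := by
      field_simp at hk
      linear_combination (2 * Real.pi * Complex.I) * hk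
    have hx : (x : ℂ) = k * D := mul_right_cancel₀ h2 h'
    have hxz : (x : ℤ) = k * D := by exact_mod_cast hx
    have : (D : ℤ) ∣ (x : ℤ) := ⟨k, by linarith⟩
    exact_mod_cast this
  · rintro ⟨c, rfl⟩
    exact ⟨c, by field_simp; norm_cast⟩

lemma root_pow_D : rootOfUnity D ^ D = 1 := (root_pow_eq_one_iff D D).mpr dvd_rfl

lemma root_pow_mod (x : ℕ) : rootOfUnity D ^ (x % D) = rootOfUnity D ^ x := by
  conv_rhs => rw [← Nat.mod_add_div x D]
  rw [pow_add, pow_mul, root_pow_D, one_pow, mul_one]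

lemma zeta_natCast (x : ℕ) : zeta D (x : ZMod D) = rootOfUnity D ^ x := by
  rw [zeta, ZMod.val_natCast, root_pow_mod]

lemma zeta_zero : zeta D 0 = 1 := by simp [zeta]

lemma zeta_add (a b : ZMod D) : zeta D (a + b) = zeta D a * zeta D b := by
  have : a + b = ((a.val + b.val : ℕ) : ZMod D) := by push_cast; simp
  rw [this, zeta_natCast, pow_add, zeta, zeta]

lemma zeta_ne_zero (a : ZMod D) : zeta D a ≠ 0 :=
  pow_ne_zero _ (by rw [rootOfUnity]; exact Complex.exp_ne_zero _)

lemma zeta_inj {a b : ZMod D} (h : zeta D a = zeta D b) : a = b := by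
  have h1 : zeta D (a - b) * zeta D b = zeta D b := by
    rw [← zeta_add]; simp [h]
  have h2 : zeta D (a - b) = 1 := by
    field_simp [zeta_ne_zero D b] at h1; exact h1
  have h3 : D ∣ (a - b).val := (root_pow_eq_one_iff D _).mp h2
  have h4 : (a - b).val < D := ZMod.val_lt _
  have h5 : (a - b).val = 0 := Nat.eq_zero_of_dvd_of_lt h3 h4
  have : a - b = 0 := by rwa [ZMod.val_eq_zero] at h5
  exact sub_eq_zero.mp this

lemma zeta_sum {α : Type*} (s : Finset α) (f : α → ZMod D) :
    zeta D (∑ i ∈ s, f i) = ∏ i ∈ s, zeta D (f i) := by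
  classical
  induction s using Finset.cons_induction with
  | empty => simp [zeta_zero]
  | cons a s ha ih => rw [Finset.sum_cons, Finset.prod_cons, zeta_add, ih]

end Zeta

/-- the pairing `⟪p,q⟫ = Σ_l p_l q_l`. -/
def sp {D n : ℕ} (p q : Fin n → ZMod D) : ZMod D := ∑ l, p l * q l

/-- the "Heisenberg" parameter group for n-quDit Paulis -/
@[ext] structure H (D n : ℕ) where
  k : ZMod D
  p : Fin n → ZMod D
  q : Fin n → ZMod D

variable {D n : ℕ}

instance : Mul (H D n) := ⟨fun s t => ⟨s.k + t.k - sp t.p s.q, s.p + t.p, s.q + t.q⟩⟩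
instance : One (H D n) := ⟨⟨0, 0, 0⟩⟩

@[simp] lemma mul_k (s t : H D n) : (s * t).k = s.k + t.k - sp t.p s.q := rfl
@[simp] lemma mul_p (s t : H D n) : (s * t).p = s.p + t.p := rfl
@[simp] lemma mul_q (s t : H D n) : (s * t).q = s.q + t.q := rfl
@[simp] lemma one_k : (1 : H D n).k = 0 := rfl
@[simp] lemma one_p : (1 : H D n).p = 0 := rfl
@[simp] lemma one_q : (1 : H D n).q = 0 := rfl

@[simp] lemma sp_zero_left (q : Fin n → ZMod D) : sp 0 q = 0 := by simp [sp]
@[simp] lemma sp_zero_right (p : Fin n → ZMod D) : sp p 0 = 0 := by simp [sp]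
lemma sp_add_left (p p' q : Fin n → ZMod D) : sp (p + p') q = sp p q + sp p' q := by
  simp [sp, add_mul, Finset.sum_add_distrib]
lemma sp_add_right (p q q' : Fin n → ZMod D) : sp p (q + q') = sp p q + sp p q' := by
  simp [sp, mul_add, Finset.sum_add_distrib]
lemma sp_smul_left (c : ZMod D) (p q : Fin n → ZMod D) : sp (c • p) q = c * sp p q := by
  simp [sp, Finset.mul_sum, mul_assoc]
lemma sp_smul_right (c : ZMod D) (p q : Fin n → ZMod D) : sp p (c • q) = c * sp p q := by
  simp only [sp, Pi.smul_apply, smul_eq_mul, Finset.mul_sum]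
  exact Finset.sum_congr rfl fun l _ => by ring

instance : Monoid (H D n) where
  mul_assoc s t u := by
    ext <;> simp [sp_add_left, sp_add_right] <;> ring
  one_mul t := by ext <;> simp
  mul_one t := by ext <;> simp

lemma pow_eq (t : H D n) (m : ℕ) :
    t ^ m = ⟨(m : ZMod D) * t.k - (m.choose 2 : ZMod D) * sp t.p t.q,
             (m : ZMod D) • t.p, (m : ZMod D) • t.q⟩ := by
  induction m with
  | zero => ext <;> simp [pow_zero]
  | succ m ih =>
    have hch : ((m + 1).choose 2 : ZMod D) = (m.choose 2 : ZMod D) + m := by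
      rw [Nat.choose_succ_succ]
      push_cast [Nat.choose_one_right]
      ring
    rw [pow_succ, ih]
    ext
    · simp [hch, sp_smul_right]
      push_cast
      ring
    · simp only [mul_p, Pi.add_apply, Pi.smul_apply, smul_eq_mul]
      push_cast; ring
    · simp only [mul_q, Pi.add_apply, Pi.smul_apply, smul_eq_mul]
      push_cast; ring

/-- the Pauli matrix with parameters `t` -/
noncomputable def Pm (D n : ℕ) (t : H D n) : Matrix (Fin n → ZMod D) (Fin n → ZMod D) ℂ :=
  Matrix.of fun f g => if f = g + t.q then zeta D (t.k + ∑ l, t.p l * f l) else 0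

variable [NeZero D]

lemma Pm_one : Pm D n 1 = 1 := by
  ext f g
  simp [Pm, Matrix.one_apply, zeta_zero, eq_comm]

lemma Pm_mul (s t : H D n) : Pm D n (s * t) = Pm D n s * Pm D n t := by
  ext f g
  rw [Matrix.mul_apply]
  simp only [Pm, Matrix.of_apply, ite_mul, mul_ite, zero_mul, mul_zero]
  rw [Finset.sum_ite_eq' Finset.univ (g + t.q)]
  simp only [Finset.mem_univ, if_true]
  by_cases h : f = g + t.q + s.q
  · have h1 : f = g + (s * t).q := by rw [h, mul_q]; abel
    rw [if_pos h, if_pos h1, ← zeta_add]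
    congr 1
    have : ∀ l, (g + t.q) l = f l - s.q l := by
      intro l; rw [h]; simp
    simp only [this, mul_k, mul_p, Pi.add_apply, add_mul, mul_sub]
    rw [Finset.sum_add_distrib, Finset.sum_sub_distrib]
    simp only [sp]
    ring_nf
  · have h1 : ¬ f = g + (s * t).q := by
      intro hc; apply h; rw [hc, mul_q]; abel
    rw [if_neg h, if_neg h1]

/-- `Pm` as a monoid homomorphism. -/
noncomputable def PmHom (D n : ℕ) [NeZero D] :
    H D n →* Matrix (Fin n → ZMod D) (Fin n → ZMod D) ℂ where
  toFun := Pm D n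
  map_one' := Pm_one
  map_mul' := Pm_mul

lemma Pm_scalar (x : ZMod D) :
    Pm D n ⟨x, 0, 0⟩ = zeta D x • (1 : Matrix (Fin n → ZMod D) (Fin n → ZMod D) ℂ) := by
  ext f g
  simp [Pm, Matrix.one_apply, eq_comm]

lemma Pm_inj : Function.Injective (Pm D n) := by
  intro s t h
  have hq : s.q = t.q := by
    have := congrFun (congrFun h s.q) 0
    simp only [Pm, Matrix.of_apply, zero_add] at this
    rw [if_true] at this
    by_contra hne
    rw [if_neg hne] at this
    exact zeta_ne_zero D _ this
  have key : ∀ f : Fin n → ZMod D, s.k + ∑ l, s.p l * f l = t.k + ∑ l, t.p l * f l := by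
    intro f
    have := congrFun (congrFun h f) (f - s.q)
    simp only [Pm, Matrix.of_apply, sub_add_cancel, if_pos rfl, ← hq] at this
    exact zeta_inj D this
  have hk : s.k = t.k := by simpa using key 0
  have hp : s.p = t.p := by
    funext l
    have := key (Pi.single l 1)
    rw [hk] at this
    have h2 := add_left_cancel this
    simpa [Pi.single_apply, mul_ite, Finset.sum_ite_eq'] using h2
  ext <;> simp [hk, hp, hq]

/-- symmetric phase -/
def cph (u : ZMod D) (t : H D n) : ZMod D := u * (2 * t.k + sp t.p t.q)

@[simp] lemma cph_one (u : ZMod D) : cph u (1 : H D n) = 0 := by simp [cph]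

lemma cph_mul_of_commute (u : ZMod D) {s t : H D n} (h : Commute s t) :
    cph u (s * t) = cph u s + cph u t := by
  have hk := congrArg H.k h
  simp only [mul_k] at hk
  have hsym : sp t.p s.q = sp s.p t.q := by linear_combination -hk
  simp only [cph, mul_k, mul_p, mul_q, sp_add_left, sp_add_right]
  linear_combination (-u) * hsym

lemma cph_pow (u : ZMod D) (t : H D n) (m : ℕ) :
    cph u (t ^ m) = (m : ZMod D) * cph u t := by
  have hnat : m * m = 2 * m.choose 2 + m := by
    induction m with
    | zero => rfl
    | succ r ih => rw [Nat.choose_succ_succ, Nat.choose_one_right]; nlinarith [ih]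
  have h2 : (m : ZMod D) * (m : ZMod D) = 2 * (m.choose 2 : ZMod D) + (m : ZMod D) := by
    exact_mod_cast congrArg (Nat.cast : ℕ → ZMod D) hnat
  rw [pow_eq]
  simp only [cph, sp_smul_left, sp_smul_right]
  linear_combination (u * sp t.p t.q) * h2

lemma cph_ofFn (u : ZMod D) : ∀ {N : ℕ} (t : Fin N → H D n),
    (∀ j k, j ≠ k → Commute (t j) (t k)) →
    cph u ((List.ofFn t).prod) = ∑ j, cph u (t j) := by
  intro N
  induction N with
  | zero => intro t _; simp
  | succ N ih =>
    intro t hc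
    rw [List.ofFn_succ, List.prod_cons]
    have hcomm : Commute (t 0) ((List.ofFn fun j => t (Fin.succ j)).prod) := by
      apply Commute.list_prod_right
      intro x hx
      rw [List.mem_ofFn] at hx
      obtain ⟨j, rfl⟩ := hx
      exact hc 0 (Fin.succ j) (Fin.succ_ne_zero j).symm
    rw [cph_mul_of_commute u hcomm,
      ih (fun j => t (Fin.succ j))
        (fun j k hjk => hc _ _ fun hh => hjk (Fin.succ_injective N hh)),
      Fin.sum_univ_succ]

lemma prod_ofFn_scalar {N : ℕ} (y : Fin N → ZMod D) :
    (List.ofFn fun j => (⟨y j, 0, 0⟩ : H D n)).prod = ⟨∑ j, y j, 0, 0⟩ := by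
  induction N with
  | zero => ext <;> simp
  | succ N ih =>
    rw [List.ofFn_succ, List.prod_cons, ih]
    ext <;> simp [Fin.sum_univ_succ]

section Bridge

lemma Xpow (a : ℕ) : XMat D ^ a =
    Matrix.of fun i j => if i = j + (a : ZMod D) then 1 else 0 := by
  induction a with
  | zero => ext i j; simp [Matrix.one_apply, eq_comm]
  | succ a ih =>
    rw [pow_succ, ih]
    ext i j
    rw [Matrix.mul_apply]
    simp only [Matrix.of_apply]
    rw [Finset.sum_eq_single (j + 1)]
    · simp only [XMat, Matrix.of_apply, if_pos rfl, mul_one]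
      push_cast
      rw [show j + 1 + (a : ZMod D) = j + ((a : ZMod D) + 1) from by ring, mul_one]
    · intro x _ hx
      simp [XMat, if_neg hx]
    · intro h; exact absurd (Finset.mem_univ _) h

lemma Zpow (a : ℕ) : ZMat D ^ a =
    Matrix.of fun i j => if i = j then rootOfUnity D ^ (a * j.val) else 0 := by
  induction a with
  | zero => ext i j; simp [Matrix.one_apply]
  | succ a ih =>
    rw [pow_succ, ih]
    ext i j
    rw [Matrix.mul_apply]
    simp only [ZMat, Matrix.of_apply, ite_mul, mul_ite, zero_mul, mul_zero]
    rw [Finset.sum_ite_eq' Finset.univ j]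
    simp only [Finset.mem_univ, if_true]
    by_cases h : i = j
    · rw [if_pos h, if_pos h, ← pow_add]
      congr 1
      ring
    · rw [if_neg h, if_neg h]

lemma pauli1_eq (k p q : ZMod D) :
    rootOfUnity D ^ k.val • (ZMat D ^ p.val * XMat D ^ q.val) =
      Matrix.of fun i j => if i = j + q then zeta D (k + p * i) else 0 := by
  rw [Zpow, Xpow]
  ext i j
  rw [Matrix.smul_apply, Matrix.mul_apply]
  simp only [Matrix.of_apply]
  have hq : ((q.val : ℕ) : ZMod D) = q := by simp [ZMod.natCast_val]
  rw [hq]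
  by_cases h : i = j + q
  · rw [if_pos h, Finset.sum_eq_single i]
    · rw [if_pos rfl, if_pos h, mul_one, smul_eq_mul, ← pow_add]
      have : zeta D (k + p * i) = rootOfUnity D ^ (k.val + p.val * i.val) := by
        rw [← zeta_natCast]
        congr 1
        push_cast
        simp [ZMod.natCast_val]
      rw [this]
    · intro x _ hx
      rw [if_neg (fun hc => hx hc.symm), zero_mul]
    · intro hmem; exact absurd (Finset.mem_univ _) hmem
  · rw [if_neg h]
    have hz : (∑ x : ZMod D, (if i = x then rootOfUnity D ^ (p.val * x.val) else 0) *
        (if x = j + q then (1:ℂ) else 0)) = 0 := by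
      refine Finset.sum_eq_zero fun x _ => ?_
      split_ifs with h1 h2
      · exact absurd (h1.trans h2) h
      · simp
      · simp
      · simp
    rw [hz, smul_zero]

lemma pauliN_eq {σ : Matrix (Fin n → ZMod D) (Fin n → ZMod D) ℂ}
    (h : IsPauliN D n σ) : ∃ t : H D n, σ = Pm D n t := by
  obtain ⟨σs, h1, rfl⟩ := h
  choose k p q hk using h1
  refine ⟨⟨∑ l, k l, p, q⟩, ?_⟩
  ext f g
  simp only [tensorFun, Matrix.of_apply, Pm]
  have hfac : ∀ l, σs l (f l) (g l) =
      if f l = g l + q l then zeta D (k l + p l * f l) else 0 := by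
    intro l; rw [hk l, pauli1_eq]; rfl
  rw [Finset.prod_congr rfl fun l _ => hfac l]
  by_cases hfg : f = g + q
  · rw [if_pos hfg]
    calc (∏ l, if f l = g l + q l then zeta D (k l + p l * f l) else 0)
        = ∏ l, zeta D (k l + p l * f l) :=
          Finset.prod_congr rfl fun l _ => if_pos (congrFun hfg l)
      _ = zeta D (∑ l, (k l + p l * f l)) := (zeta_sum D _ _).symm
      _ = zeta D ((∑ l, k l) + ∑ l, p l * f l) := by rw [Finset.sum_add_distrib]
  · rw [if_neg hfg]
    obtain ⟨l, hl⟩ : ∃ l, ¬ (f l = g l + q l) := by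
      by_contra hall
      push_neg at hall
      exact hfg (funext hall)
    exact Finset.prod_eq_zero (Finset.mem_univ l) (if_neg hl)

lemma isPauliN_Pm_scalar (x : ZMod D) (j : Fin n) :
    IsPauliN D n (Pm D n ⟨x, 0, 0⟩) := by
  set c : Fin n → ZMod D := fun l => if l = j then x else 0 with hc
  refine ⟨fun l => rootOfUnity D ^ (c l).val •
      (ZMat D ^ (0 : ZMod D).val * XMat D ^ (0 : ZMod D).val),
    fun l => ⟨c l, 0, 0, rfl⟩, ?_⟩
  ext f g
  simp only [tensorFun, Matrix.of_apply]
  have hfac : ∀ l, (rootOfUnity D ^ (c l).val •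
      (ZMat D ^ (0 : ZMod D).val * XMat D ^ (0 : ZMod D).val)) (f l) (g l)
      = if f l = g l then zeta D (c l) else 0 := by
    intro l
    rw [pauli1_eq]
    simp only [Matrix.of_apply, add_zero, zero_mul]
  rw [Pm_scalar, Matrix.smul_apply, Matrix.one_apply,
    Finset.prod_congr rfl fun l _ => hfac l]
  by_cases hfg : f = g
  · rw [if_pos hfg, smul_eq_mul, mul_one]
    symm
    calc (∏ l, if f l = g l then zeta D (c l) else 0)
        = ∏ l, zeta D (c l) :=
          Finset.prod_congr rfl fun l _ => if_pos (congrFun hfg l)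
      _ = zeta D (∑ l, c l) := (zeta_sum D _ _).symm
      _ = zeta D x := by
          rw [hc, Finset.sum_ite_eq' Finset.univ j fun _ => x]
          simp
  · rw [if_neg hfg, smul_zero]
    symm
    obtain ⟨l, hl⟩ : ∃ l, ¬ (f l = g l) := by
      by_contra hall
      push_neg at hall
      exact hfg (funext hall)
    exact Finset.prod_eq_zero (Finset.mem_univ l) (if_neg hl)

end Bridge

end LCSAux

/-- for `D` an odd positive integer, the LCS `(M,b)` over `ℤ_D` has a
quantum solution on `(ℂ^D)^{⊗n}` consisting of `n`-quDit generalized Pauli operators iff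
it has a classical solution. -/
theorem pauli_quantum_iff_classical (D : ℕ) [NeZero D] (hD : Odd D) {m n : ℕ}
    (M : Matrix (Fin m) (Fin n) (ZMod D)) (b : Fin m → ZMod D) :
    (∃ A : Fin n → Matrix (Fin n → ZMod D) (Fin n → ZMod D) ℂ,
      (∀ j, IsPauliN D n (A j)) ∧
      (∀ j, A j ^ D = 1) ∧
      (∀ j k : Fin n, (∃ i, M i j ≠ 0 ∧ M i k ≠ 0) → Commute (A j) (A k)) ∧
      (∀ i : Fin m, (List.ofFn fun j => A j ^ (M i j).val).prod
          = rootOfUnity D ^ (b i).val • 1)) ↔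
      ∃ x : Fin n → ZMod D, M.mulVec x = b := by
  classical
  open LCSAux in
  obtain ⟨v, hv⟩ : ∃ v : (ZMod D)ˣ, (v : ZMod D) = 2 :=
    ⟨ZMod.unitOfCoprime 2 hD.coprime_two_left, by
      rw [ZMod.coe_unitOfCoprime]; push_cast; ring⟩
  set u : ZMod D := ((v⁻¹ : (ZMod D)ˣ) : ZMod D) with hudef
  have hu : (2 : ZMod D) * u = 1 := by
    rw [← hv, hudef]
    exact_mod_cast v.mul_inv
  have hval : ∀ a : ZMod D, ((a.val : ℕ) : ZMod D) = a := by
    intro a; simp [ZMod.natCast_val, ZMod.cast_id]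
  have hcph_scalar : ∀ y : ZMod D, cph u (⟨y, 0, 0⟩ : H D n) = y := by
    intro y
    simp only [cph, sp_zero_left, add_zero]
    linear_combination y * hu
  constructor
  · rintro ⟨A, hP, -, hcomm, hrow⟩
    choose t ht using fun j => pauliN_eq (hP j)
    refine ⟨fun j => cph u (t j), ?_⟩
    funext i
    have hcmt : ∀ j k : Fin n, j ≠ k →
        Commute (t j ^ (M i j).val) (t k ^ (M i k).val) := by
      intro j k hjk
      by_cases hj : M i j = 0
      · rw [hj, ZMod.val_zero, pow_zero]
        exact Commute.one_left _
      by_cases hk2 : M i k = 0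
      · rw [hk2, ZMod.val_zero, pow_zero]
        exact Commute.one_right _
      have hAc : Commute (A j) (A k) := hcomm j k ⟨i, hj, hk2⟩
      have hPm : Pm D n (t j * t k) = Pm D n (t k * t j) := by
        rw [Pm_mul, Pm_mul, ← ht j, ← ht k]
        exact hAc
      exact Commute.pow_pow (Pm_inj hPm) _ _
    have hlist : (List.ofFn fun j => t j ^ (M i j).val).prod = (⟨b i, 0, 0⟩ : H D n) := by
      apply Pm_inj
      have h1 : Pm D n ((List.ofFn fun j => t j ^ (M i j).val).prod)
          = (List.ofFn fun j => A j ^ (M i j).val).prod := by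
        rw [show Pm D n = ⇑(PmHom D n) from rfl, map_list_prod, List.map_ofFn]
        refine congrArg List.prod (congrArg List.ofFn (funext fun j => ?_))
        show PmHom D n (t j ^ (M i j).val) = A j ^ (M i j).val
        rw [map_pow]
        rw [show (PmHom D n) (t j) = Pm D n (t j) from rfl, ← ht j]
      rw [h1, hrow i, Pm_scalar]
      rfl
    have hc := congrArg (cph u) hlist
    rw [cph_ofFn u _ hcmt, hcph_scalar] at hc
    rw [Matrix.mulVec, ← hc]
    simp only [dotProduct]
    refine Finset.sum_congr rfl fun j _ => ?_
    rw [cph_pow, hval]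
  · rintro ⟨x, hx⟩
    refine ⟨fun j => Pm D n ⟨x j, 0, 0⟩, fun j => isPauliN_Pm_scalar (x j) j, ?_, ?_, ?_⟩
    · intro j
      rw [show Pm D n = ⇑(PmHom D n) from rfl, ← map_pow]
      have : (⟨x j, 0, 0⟩ : H D n) ^ D = 1 := by
        rw [pow_eq]
        ext <;> simp [ZMod.natCast_self]
      rw [this, map_one]
    · intro j k _
      have : (⟨x j, 0, 0⟩ : H D n) * ⟨x k, 0, 0⟩ = ⟨x k, 0, 0⟩ * ⟨x j, 0, 0⟩ := by
        ext <;> simp [add_comm]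
      show Pm D n _ * Pm D n _ = Pm D n _ * Pm D n _
      rw [← Pm_mul, ← Pm_mul, this]
    · intro i
      have h1 : (List.ofFn fun j => Pm D n (⟨x j, 0, 0⟩ : H D n) ^ (M i j).val).prod
          = Pm D n ((List.ofFn fun j => (⟨x j, 0, 0⟩ : H D n) ^ (M i j).val).prod) := by
        rw [show Pm D n = ⇑(PmHom D n) from rfl, map_list_prod, List.map_ofFn]
        refine congrArg List.prod (congrArg List.ofFn (funext fun j => ?_))
        show (PmHom D n) (⟨x j, 0, 0⟩ : H D n) ^ (M i j).val
            = (PmHom D n) ((⟨x j, 0, 0⟩ : H D n) ^ (M i j).val)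
        rw [map_pow]
      rw [h1]
      have h2 : ∀ j, (⟨x j, 0, 0⟩ : H D n) ^ (M i j).val
          = (⟨M i j * x j, 0, 0⟩ : H D n) := by
        intro j
        rw [pow_eq]
        ext <;> simp [hval]
      have h3 : (List.ofFn fun j => (⟨x j, 0, 0⟩ : H D n) ^ (M i j).val).prod
          = (⟨∑ j, M i j * x j, 0, 0⟩ : H D n) := by
        rw [show (List.ofFn fun j => (⟨x j, 0, 0⟩ : H D n) ^ (M i j).val)
            = List.ofFn fun j => (⟨M i j * x j, 0, 0⟩ : H D n) from by
          congr 1; funext j; exact h2 j]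
        exact prod_ofFn_scalar _
      rw [h3]
      have h4 : (∑ j, M i j * x j) = b i := by
        rw [← hx]
        simp [Matrix.mulVec, dotProduct]
      rw [h4, Pm_scalar]
      rfl
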